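/- Let n ≥ 9 be an integer, let μ = μ₂(𝔏(Q'_n)) be the second-smallest eigenvalue of 𝔏(Q'_n), and let v = (v₁,…,v_n)ᵀ be an eigenvector of 𝔏(Q'_n) with eigenvalue μ. Then (n−μ)(n−1−μ) − (n−2)² > n/2 and ((n−μ)(n−1−μ) − (n−2)²)·(v₂ − v₁) = μ·v₃. -/

import Mathlib

open Matrix

/-- The ascending sorted list of eigenvalues (with multiplicity) of a real
symmetric (Hermitian) matrix; junk value `[]` otherwise. -/
noncomputable def eigsList {m : Type*} [Fintype m] [DecidableEq m]
    (M : Matrix m m ℝ) : List ℝ :=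
  if h : M.IsHermitian then Multiset.sort (Finset.univ.val.map h.eigenvalues) (· ≤ ·)
  else []

/-- The `k`-th largest eigenvalue (1-indexed, counted with multiplicity). -/
noncomputable def kthLargest {m : Type*} [Fintype m] [DecidableEq m]
    (M : Matrix m m ℝ) (k : ℕ) : ℝ :=
  (eigsList M).getD (Fintype.card m - k) 0

/-- The `k`-th smallest eigenvalue (1-indexed, counted with multiplicity). -/
noncomputable def kthSmallest {m : Type*} [Fintype m] [DecidableEq m]
    (M : Matrix m m ℝ) (k : ℕ) : ℝ :=
  (eigsList M).getD (k - 1) 0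

/-- The Laplacian `𝔏(M) = diag(M·1) − M`. -/
noncomputable def Lap {n : ℕ} (M : Matrix (Fin n) (Fin n) ℝ) : Matrix (Fin n) (Fin n) ℝ :=
  Matrix.diagonal (fun i => ∑ j, M i j) - M

/-- The matrix `Q_n` (1-indexed description, realized on `Fin n`). -/
noncomputable def Qmat (n : ℕ) : Matrix (Fin n) (Fin n) ℝ := fun i j =>
  let d := ((i.val : ℤ) - (j.val : ℤ)).natAbs
  if d = 0 then
    (if i.val = 0 ∨ i.val = n - 1 then ((n : ℝ) ^ 2 - n - 6) / 2
     else if i.val = 1 ∨ i.val = n - 2 then ((n : ℝ) ^ 2 - 3 * n - 2) / 2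
     else ((n : ℝ) ^ 2 - 3 * n - 6) / 2)
  else if d = 1 then (n : ℝ) - 2
  else if d = 2 then 2
  else 0

/-- The matrix `Q'_n` (1-indexed description, realized on `Fin n`). -/
noncomputable def Qp (n : ℕ) : Matrix (Fin n) (Fin n) ℝ := fun i j =>
  let a := i.val + 1
  let b := j.val + 1
  if (a = 1 ∧ b = 2) ∨ (a = 2 ∧ b = 1) then (n : ℝ) - 2
  else if (a = 1 ∧ b = 3) ∨ (a = 3 ∧ b = 1) then 2
  else if a = 2 ∧ b = 2 then 1
  else if (a = 2 ∧ b = 3) ∨ (a = 3 ∧ b = 2) then 1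
  else if a = 3 ∧ b = 3 then (n : ℝ) - 4
  else if (3 ≤ a ∧ a ≤ n - 1 ∧ b = a + 1) ∨ (3 ≤ b ∧ b ≤ n - 1 ∧ a = b + 1) then 1
  else if a = b ∧ 4 ≤ a ∧ a ≤ n - 1 then (n : ℝ) - 2
  else if a = n ∧ b = n then (n : ℝ) - 1
  else 0

/-! ### Auxiliary lemmas -/

set_option maxHeartbeats 1000000

section AuxSums

lemma sum_two_aux {n : ℕ} (f : Fin n → ℝ) (i1 i2 : Fin n) (h12 : i1 ≠ i2)
    (hf : ∀ j, j ≠ i1 → j ≠ i2 → f j = 0) : ∑ j, f j = f i1 + f i2 := by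
  classical
  rw [← Finset.sum_subset (Finset.subset_univ ({i1, i2} : Finset (Fin n)))]
  · rw [Finset.sum_insert (by simpa using h12), Finset.sum_singleton]
  · intro x _ hx
    simp only [Finset.mem_insert, Finset.mem_singleton] at hx
    push_neg at hx
    exact hf x hx.1 hx.2

lemma sum_three_aux {n : ℕ} (f : Fin n → ℝ) (i1 i2 i3 : Fin n) (h12 : i1 ≠ i2)
    (h13 : i1 ≠ i3) (h23 : i2 ≠ i3)
    (hf : ∀ j, j ≠ i1 → j ≠ i2 → j ≠ i3 → f j = 0) : ∑ j, f j = f i1 + f i2 + f i3 := by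
  classical
  rw [← Finset.sum_subset (Finset.subset_univ ({i1, i2, i3} : Finset (Fin n)))]
  · rw [Finset.sum_insert (by simp [h12, h13]),
      Finset.sum_insert (by simpa using h23), Finset.sum_singleton, add_assoc]
  · intro x _ hx
    simp only [Finset.mem_insert, Finset.mem_singleton] at hx
    push_neg at hx
    exact hf x hx.1 hx.2.1 hx.2.2

end AuxSums

section QpEntries

variable {n : ℕ} (hn : n ≥ 9)
include hn

lemma qp01 : Qp n ⟨0, by omega⟩ ⟨1, by omega⟩ = (n:ℝ) - 2 := by
  simp only [Qp]; norm_num <;> (split_ifs <;> first | omega | norm_num)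

lemma qp02 : Qp n ⟨0, by omega⟩ ⟨2, by omega⟩ = 2 := by
  simp only [Qp]; norm_num <;> (split_ifs <;> first | omega | norm_num)

lemma qp0z (j : Fin n) (h1 : j.val ≠ 1) (h2 : j.val ≠ 2) : Qp n ⟨0, by omega⟩ j = 0 := by
  simp only [Qp]; norm_num <;> (split_ifs <;> first | omega | norm_num)

lemma qp10 : Qp n ⟨1, by omega⟩ ⟨0, by omega⟩ = (n:ℝ) - 2 := by
  simp only [Qp]; norm_num <;> (split_ifs <;> first | omega | norm_num)

lemma qp11 : Qp n ⟨1, by omega⟩ ⟨1, by omega⟩ = 1 := by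
  simp only [Qp]; norm_num <;> (split_ifs <;> first | omega | norm_num)

lemma qp12 : Qp n ⟨1, by omega⟩ ⟨2, by omega⟩ = 1 := by
  simp only [Qp]; norm_num <;> (split_ifs <;> first | omega | norm_num)

lemma qp1z (j : Fin n) (h0 : j.val ≠ 0) (h1 : j.val ≠ 1) (h2 : j.val ≠ 2) :
    Qp n ⟨1, by omega⟩ j = 0 := by
  simp only [Qp]; norm_num <;> (split_ifs <;> first | omega | norm_num)

lemma qpll : Qp n ⟨n-1, by omega⟩ ⟨n-1, by omega⟩ = (n:ℝ) - 1 := by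
  simp only [Qp]; norm_num <;> (split_ifs <;> first | omega | norm_num)

lemma qplm : Qp n ⟨n-1, by omega⟩ ⟨n-2, by omega⟩ = 1 := by
  simp only [Qp]; norm_num <;> (split_ifs <;> first | omega | norm_num)

lemma qplz (j : Fin n) (h1 : j.val ≠ n-2) (h2 : j.val ≠ n-1) :
    Qp n ⟨n-1, by omega⟩ j = 0 := by
  simp only [Qp]; norm_num <;> (split_ifs <;> first | omega | norm_num)

end QpEntries

lemma qp_symm (n : ℕ) (i j : Fin n) : Qp n i j = Qp n j i := by
  simp only [Qp]
  exact if_congr (by omega) rfl (if_congr (by omega) rfl (if_congr (by omega) rfl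
    (if_congr (by omega) rfl (if_congr (by omega) rfl (if_congr (by omega) rfl
    (if_congr (by omega) rfl (if_congr (by omega) rfl rfl)))))))

lemma lap_transpose (n : ℕ) : (Lap (Qp n))ᵀ = Lap (Qp n) := by
  have hq : (Qp n)ᵀ = Qp n := by ext i j; exact qp_symm n j i
  simp [Lap, transpose_sub, diagonal_transpose, hq]

lemma lap_herm (n : ℕ) : (Lap (Qp n)).IsHermitian := by
  have := lap_transpose n
  unfold Matrix.IsHermitian
  ext i j
  simp only [conjTranspose_apply, star_trivial]
  exact congrFun (congrFun this i) j

lemma lap_mulVec_one {n : ℕ} (M : Matrix (Fin n) (Fin n) ℝ) :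
    Lap M *ᵥ (fun _ => (1:ℝ)) = 0 := by
  ext i
  simp only [Lap, sub_mulVec, Pi.sub_apply, Pi.zero_apply, mulVec_diagonal]
  simp [mulVec, dotProduct]

lemma lap_diag {n : ℕ} (M : Matrix (Fin n) (Fin n) ℝ) (i : Fin n) :
    Lap M i i = (∑ j, M i j) - M i i := by
  simp [Lap, diagonal_apply_eq]

theorem stmt15 (n : ℕ) (hn : 9 ≤ n) (mu : ℝ) (hmu : mu = kthSmallest (Lap (Qp n)) 2)
    (v : Fin n → ℝ) (hv : v ≠ 0) (hev : Lap (Qp n) *ᵥ v = mu • v) :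
    ((n : ℝ) - mu) * ((n : ℝ) - 1 - mu) - ((n : ℝ) - 2) ^ 2 > (n : ℝ) / 2 ∧
      (((n : ℝ) - mu) * ((n : ℝ) - 1 - mu) - ((n : ℝ) - 2) ^ 2) *
          (v ⟨1, by omega⟩ - v ⟨0, by omega⟩) = mu * v ⟨2, by omega⟩ := by
  classical
  have hn9 : (9:ℝ) ≤ (n:ℝ) := by exact_mod_cast hn
  have hH : (Lap (Qp n)).IsHermitian := lap_herm n
  set L : Matrix (Fin n) (Fin n) ℝ := Lap (Qp n) with hLdef
  set lam : Fin n → ℝ := hH.eigenvalues with hlamdef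
  set l : List ℝ := Multiset.sort (Finset.univ.val.map lam) (· ≤ ·) with hldef
  have hlen : l.length = n := by
    rw [hldef, Multiset.length_sort]
    simp
  have hsorted : l.Pairwise (· ≤ ·) := Multiset.pairwise_sort _ _
  have hmult : (l : Multiset ℝ) = Finset.univ.val.map lam := Multiset.sort_eq _ _
  -- μ is the second entry of the sorted list
  have hmu1 : mu = l.get ⟨1, by omega⟩ := by
    rw [hmu]
    unfold kthSmallest eigsList
    rw [dif_pos hH]
    exact List.getD_eq_get _ _ ⟨1, by rw [hlen]; omega⟩
  -- decompose the sorted list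
  obtain ⟨l0, t0, hl0⟩ : ∃ a t, l = a :: t := by
    cases hl : l with
    | nil => rw [hl] at hlen; simp at hlen; omega
    | cons a t => exact ⟨a, t, rfl⟩
  obtain ⟨l1, t1, hl1⟩ : ∃ a t, t0 = a :: t := by
    cases hl : t0 with
    | nil => rw [hl0, hl] at hlen; simp at hlen; omega
    | cons a t => exact ⟨a, t, rfl⟩
  have hmu2 : mu = l1 := by rw [hmu1]; simp [hl0, hl1]
  -- the index of a minimal eigenvalue
  obtain ⟨i0, -, hi0⟩ := Finset.exists_min_image (Finset.univ : Finset (Fin n)) lam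
    ⟨⟨0, by omega⟩, Finset.mem_univ _⟩
  have hl0min : l0 = lam i0 := by
    have h1 : lam i0 ∈ l := by
      rw [← Multiset.mem_coe, hmult]
      exact Multiset.mem_map_of_mem _ (Finset.mem_univ i0)
    have h2 : l0 ≤ lam i0 := by
      rw [hl0] at h1
      rcases List.mem_cons.mp h1 with h | h
      · exact le_of_eq h.symm
      · exact List.rel_of_pairwise_cons (hl0 ▸ hsorted) h
    have h3 : lam i0 ≤ l0 := by
      have hmem : l0 ∈ l := by rw [hl0]; exact List.mem_cons_self
      rw [← Multiset.mem_coe, hmult] at hmem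
      obtain ⟨j, -, hj⟩ := Multiset.mem_map.mp hmem
      rw [← hj]; exact hi0 j (Finset.mem_univ j)
    linarith
  -- all other eigenvalues are at least μ
  have claimA : ∀ j, j ≠ i0 → mu ≤ lam j := by
    intro j hj
    have hjm : lam j ∈ (Finset.univ.val.map lam).erase (lam i0) := by
      have huniv : (Finset.univ : Finset (Fin n)).val
          = i0 ::ₘ ((Finset.univ : Finset (Fin n)).val.erase i0) :=
        (Multiset.cons_erase (Finset.mem_val.mpr (Finset.mem_univ i0))).symm
      rw [huniv, Multiset.map_cons, Multiset.erase_cons_head]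
      exact Multiset.mem_map_of_mem _
        ((Multiset.mem_erase_of_ne hj).mpr (Finset.mem_val.mpr (Finset.mem_univ j)))
    rw [← hmult, hl0, hl1, ← hl0min] at hjm
    have hmemt : lam j ∈ l1 :: t1 := by
      have : ((l0 :: l1 :: t1 : List ℝ) : Multiset ℝ).erase l0 = ((l1 :: t1 : List ℝ) : Multiset ℝ) := by
        rw [← Multiset.cons_coe, Multiset.erase_cons_head]
      rw [this] at hjm
      exact Multiset.mem_coe.mp hjm
    have hsorted' : (l1 :: t1).Pairwise (· ≤ ·) := by
      have := hsorted; rw [hl0, hl1] at this; exact this.of_cons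
    rcases List.mem_cons.mp hmemt with h | h
    · rw [hmu2, h]
    · rw [hmu2]; exact List.rel_of_pairwise_cons hsorted' h
  -- spectral decomposition
  set Umat : Matrix (Fin n) (Fin n) ℝ := (hH.eigenvectorUnitary : Matrix (Fin n) (Fin n) ℝ)
    with hUdef
  have hU1 : Umat * star Umat = 1 := mem_unitaryGroup_iff.mp (hH.eigenvectorUnitary).2
  have hspec : L = Umat * diagonal lam * star Umat := by
    have h := hH.spectral_theorem
    rw [RCLike.ofReal_real_eq_id] at h
    simpa using h
  have hLsym : Lᵀ = L := lap_transpose n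
  -- Rayleigh quotient lower bound for vectors orthogonal to the i0 eigenvector
  have claimB : ∀ w : Fin n → ℝ, (star Umat *ᵥ w) i0 = 0 →
      mu * (w ⬝ᵥ w) ≤ w ⬝ᵥ (L *ᵥ w) := by
    intro w hw
    set y : Fin n → ℝ := star Umat *ᵥ w with hy
    have hwy : w ᵥ* Umat = y := by
      rw [hy]
      ext k
      simp only [vecMul, mulVec, dotProduct, Matrix.star_apply, star_trivial]
      exact Finset.sum_congr rfl fun j _ => mul_comm _ _
    have hwU : w = Umat *ᵥ y := by
      rw [hy, mulVec_mulVec, hU1, one_mulVec]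
    have hdot : w ⬝ᵥ w = y ⬝ᵥ y := by
      nth_rewrite 2 [hwU]
      rw [dotProduct_mulVec, hwy]
    have hq : w ⬝ᵥ (L *ᵥ w) = ∑ i, lam i * (y i)^2 := by
      rw [hspec, ← mulVec_mulVec, ← mulVec_mulVec, dotProduct_mulVec, hwy]
      simp only [dotProduct, mulVec_diagonal]
      exact Finset.sum_congr rfl fun i _ => by ring
    have hkey : ∀ i, mu * (y i)^2 ≤ lam i * (y i)^2 := by
      intro i
      by_cases hi : i = i0
      · subst hi; rw [hw]; simp
      · exact mul_le_mul_of_nonneg_right (claimA i hi) (sq_nonneg _)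
    calc mu * (w ⬝ᵥ w) = ∑ i, mu * (y i)^2 := by
          rw [hdot]; simp only [dotProduct]; rw [Finset.mul_sum]
          exact Finset.sum_congr rfl fun i _ => by ring
      _ ≤ ∑ i, lam i * (y i)^2 := Finset.sum_le_sum fun i _ => hkey i
      _ = w ⬝ᵥ (L *ᵥ w) := hq.symm
  -- the test vectors
  set lastI : Fin n := ⟨n-1, by omega⟩ with hlastI
  set e : Fin n → ℝ := Pi.single lastI 1 with he
  set one : Fin n → ℝ := fun _ => (1:ℝ) with hone
  have hLone : L *ᵥ one = 0 := lap_mulVec_one _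
  have honeL : one ᵥ* L = 0 := by
    have h : one ᵥ* Lᵀ = L *ᵥ one := vecMul_transpose L one
    rw [hLsym] at h; rw [h, hLone]
  have hSlast : ∑ j, Qp n lastI j = (n:ℝ) := by
    rw [sum_two_aux (fun j => Qp n lastI j) ⟨n-2, by omega⟩ ⟨n-1, by omega⟩
      ((by simp only [ne_eq, Fin.mk.injEq]; omega)) (fun j h1 h2 => qplz hn j
        (by simpa using fun h => h1 (Fin.eq_of_val_eq h))
        (by simpa using fun h => h2 (Fin.eq_of_val_eq h)))]
    rw [show lastI = ⟨n-1, by omega⟩ from rfl]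
    rw [qplm hn, qpll hn]
    ring
  have heLe : e ⬝ᵥ (L *ᵥ e) = 1 := by
    rw [he, mulVec_single, single_dotProduct]
    simp only [mul_one, one_mul, MulOpposite.op_one, one_smul, col_apply]
    rw [hLdef, lap_diag, hSlast]
    rw [show lastI = ⟨n-1, by omega⟩ from rfl, qpll hn]
    ring
  have honeLe : one ⬝ᵥ (L *ᵥ e) = 0 := by
    rw [dotProduct_mulVec, honeL, zero_dotProduct]
  have honeone : one ⬝ᵥ one = (n:ℝ) := by
    simp [hone, dotProduct]
  have honee : one ⬝ᵥ e = 1 := by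
    rw [he, dotProduct_single]; simp [hone]
  have heone : e ⬝ᵥ one = 1 := by
    rw [he, single_dotProduct]; simp [hone]
  have heee : e ⬝ᵥ e = 1 := by
    rw [he, dotProduct_single]; simp
  -- upper bound on μ
  have hmub : mu * ((n:ℝ) - 1) ≤ (n:ℝ) := by
    by_cases hc2z : (star Umat *ᵥ e) i0 = 0
    · have hB := claimB e hc2z
      rw [heee, heLe] at hB
      have hmu1' : mu ≤ 1 := by linarith
      nlinarith [mul_le_mul_of_nonneg_right hmu1' (show (0:ℝ) ≤ (n:ℝ)-1 by linarith)]
    · obtain ⟨a, b, hane, hab⟩ : ∃ a b : ℝ, a ≠ 0 ∧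
          a * (star Umat *ᵥ one) i0 + b * (star Umat *ᵥ e) i0 = 0 :=
        ⟨(star Umat *ᵥ e) i0, -((star Umat *ᵥ one) i0), hc2z, by ring⟩
      set w : Fin n → ℝ := a • one + b • e with hw
      have hworth : (star Umat *ᵥ w) i0 = 0 := by
        rw [hw, mulVec_add, mulVec_smul, mulVec_smul]
        simpa using hab
      have hB := claimB w hworth
      have hLw : L *ᵥ w = b • (L *ᵥ e) := by
        rw [hw, mulVec_add, mulVec_smul, mulVec_smul, hLone]
        simp
      have hwLw : w ⬝ᵥ (L *ᵥ w) = b * b := by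
        rw [hLw, hw, add_dotProduct, smul_dotProduct, smul_dotProduct]
        rw [dotProduct_smul, dotProduct_smul, honeLe, heLe]
        simp [smul_eq_mul]
      have hww : w ⬝ᵥ w = a^2 * n + 2*a*b + b^2 := by
        rw [hw, add_dotProduct, smul_dotProduct, smul_dotProduct,
          dotProduct_add, dotProduct_add, dotProduct_smul, dotProduct_smul,
          dotProduct_smul, dotProduct_smul, honeone, honee, heone, heee]
        simp only [smul_eq_mul]
        ring
      rw [hwLw, hww] at hB
      have ha2 : 0 < a^2 := by
        rcases (sq_nonneg a).lt_or_eq with h | h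
        · exact h
        · exact absurd ((pow_eq_zero_iff (by norm_num)).mp h.symm) hane
      have hS : 0 < a^2 * n + 2*a*b + b^2 := by nlinarith [sq_nonneg (a+b)]
      have h1 : ((n:ℝ)-1) * (b*b) ≤ (n:ℝ) * (a^2 * n + 2*a*b + b^2) := by
        nlinarith [sq_nonneg ((n:ℝ)*a + b)]
      have h2 : (mu * ((n:ℝ)-1)) * (a^2 * n + 2*a*b + b^2)
          ≤ (n:ℝ) * (a^2 * n + 2*a*b + b^2) := by
        have h3 : ((n:ℝ)-1) * (mu * (a^2 * n + 2*a*b + b^2)) ≤ ((n:ℝ)-1) * (b*b) :=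
          mul_le_mul_of_nonneg_left hB (by linarith)
        calc (mu * ((n:ℝ)-1)) * (a^2 * n + 2*a*b + b^2)
            = ((n:ℝ)-1) * (mu * (a^2 * n + 2*a*b + b^2)) := by ring
          _ ≤ ((n:ℝ)-1) * (b*b) := h3
          _ ≤ (n:ℝ) * (a^2 * n + 2*a*b + b^2) := h1
      exact le_of_mul_le_mul_right h2 hS
  -- Part 1
  have part1 : ((n : ℝ) - mu) * ((n : ℝ) - 1 - mu) - ((n : ℝ) - 2) ^ 2 > (n : ℝ) / 2 := by
    have h1 : 0 ≤ (n:ℝ) - mu * ((n:ℝ)-1) := by linarith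
    have h2 : 0 ≤ (2*(n:ℝ)-1)*((n:ℝ)-1) - (n:ℝ) - mu*((n:ℝ)-1) := by nlinarith
    have h3 : (0:ℝ) ≤ ((n:ℝ)-9) * ((n:ℝ)^2 - (n:ℝ) + 10) :=
      mul_nonneg (by linarith) (by nlinarith [sq_nonneg ((n:ℝ) - 1)])
    nlinarith [mul_nonneg h1 h2, sq_nonneg ((n:ℝ)-1), h3]
  refine ⟨part1, ?_⟩
  -- Part 2: the eigenvector equation at coordinates 0 and 1
  have h0 := congrFun hev ⟨0, by omega⟩
  have h1 := congrFun hev ⟨1, by omega⟩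
  have hS0 : ∑ j, Qp n ⟨0, by omega⟩ j = (n:ℝ) := by
    rw [sum_two_aux (fun j => Qp n ⟨0, by omega⟩ j) ⟨1, by omega⟩ ⟨2, by omega⟩
      ((by simp only [ne_eq, Fin.mk.injEq]; omega)) (fun j hj1 hj2 => qp0z hn j
        (fun h => hj1 (Fin.eq_of_val_eq h)) (fun h => hj2 (Fin.eq_of_val_eq h)))]
    rw [qp01 hn, qp02 hn]; ring
  have hS1 : ∑ j, Qp n ⟨1, by omega⟩ j = (n:ℝ) := by
    rw [sum_three_aux (fun j => Qp n ⟨1, by omega⟩ j) ⟨0, by omega⟩ ⟨1, by omega⟩ ⟨2, by omega⟩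
      ((by simp only [ne_eq, Fin.mk.injEq]; omega)) ((by simp only [ne_eq, Fin.mk.injEq]; omega)) ((by simp only [ne_eq, Fin.mk.injEq]; omega))
      (fun j hj0 hj1 hj2 => qp1z hn j (fun h => hj0 (Fin.eq_of_val_eq h))
        (fun h => hj1 (Fin.eq_of_val_eq h)) (fun h => hj2 (Fin.eq_of_val_eq h)))]
    rw [qp10 hn, qp11 hn, qp12 hn]; ring
  have hD0 : (Qp n *ᵥ v) ⟨0, by omega⟩
      = ((n:ℝ)-2) * v ⟨1, by omega⟩ + 2 * v ⟨2, by omega⟩ := by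
    show ∑ j, Qp n ⟨0, by omega⟩ j * v j = _
    rw [sum_two_aux (fun j => Qp n ⟨0, by omega⟩ j * v j) ⟨1, by omega⟩ ⟨2, by omega⟩
      ((by simp only [ne_eq, Fin.mk.injEq]; omega)) (fun j hj1 hj2 => by
        show Qp n ⟨0, by omega⟩ j * v j = 0
        rw [qp0z hn j (fun h => hj1 (Fin.eq_of_val_eq h))
          (fun h => hj2 (Fin.eq_of_val_eq h)), zero_mul])]
    rw [qp01 hn, qp02 hn]
  have hD1 : (Qp n *ᵥ v) ⟨1, by omega⟩
      = ((n:ℝ)-2) * v ⟨0, by omega⟩ + v ⟨1, by omega⟩ + v ⟨2, by omega⟩ := by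
    show ∑ j, Qp n ⟨1, by omega⟩ j * v j = _
    rw [sum_three_aux (fun j => Qp n ⟨1, by omega⟩ j * v j)
      ⟨0, by omega⟩ ⟨1, by omega⟩ ⟨2, by omega⟩
      ((by simp only [ne_eq, Fin.mk.injEq]; omega)) ((by simp only [ne_eq, Fin.mk.injEq]; omega)) ((by simp only [ne_eq, Fin.mk.injEq]; omega))
      (fun j hj0 hj1 hj2 => by
        show Qp n ⟨1, by omega⟩ j * v j = 0
        rw [qp1z hn j (fun h => hj0 (Fin.eq_of_val_eq h)) (fun h => hj1 (Fin.eq_of_val_eq h))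
          (fun h => hj2 (Fin.eq_of_val_eq h)), zero_mul])]
    rw [qp10 hn, qp11 hn, qp12 hn]; ring
  have hE0 : (n:ℝ) * v ⟨0, by omega⟩ - (((n:ℝ)-2) * v ⟨1, by omega⟩ + 2 * v ⟨2, by omega⟩)
      = mu * v ⟨0, by omega⟩ := by
    have := h0
    rw [hLdef] at this
    rw [show Lap (Qp n) *ᵥ v = diagonal (fun i => ∑ j, Qp n i j) *ᵥ v - Qp n *ᵥ v from by
      rw [Lap, sub_mulVec]] at this
    simp only [Pi.sub_apply, mulVec_diagonal, Pi.smul_apply, smul_eq_mul] at this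
    rw [hS0, hD0] at this
    exact this
  have hE1 : (n:ℝ) * v ⟨1, by omega⟩ - (((n:ℝ)-2) * v ⟨0, by omega⟩ + v ⟨1, by omega⟩
      + v ⟨2, by omega⟩) = mu * v ⟨1, by omega⟩ := by
    have := h1
    rw [hLdef] at this
    rw [show Lap (Qp n) *ᵥ v = diagonal (fun i => ∑ j, Qp n i j) *ᵥ v - Qp n *ᵥ v from by
      rw [Lap, sub_mulVec]] at this
    simp only [Pi.sub_apply, mulVec_diagonal, Pi.smul_apply, smul_eq_mul] at this
    rw [hS1, hD1] at this
    exact this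
  linear_combination (mu - 1) * hE0 + (2 - mu) * hE1
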